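/- For every chord diagram d, every integer k ≥ 2, and any two orientations of the chords of d, the sum of the signs of the 2k-cycles in the directed intersection graph induced by the first orientation equals the corresponding sum for the second orientation; hence R_k(d) is well defined, independently of the chosen orientation of the chords. -/

import Mathlib

open Finset
open scoped Classical

/-- The cyclic successor of an element of `Fin m`. -/
def cyclicSucc {m : ℕ} (a : Fin m) : Fin m :=
  ⟨((a : ℕ) + 1) % m, Nat.mod_lt _ a.pos⟩

/-- The cyclic predecessor of an element of `Fin m`. -/
def cyclicPred {m : ℕ} (a : Fin m) : Fin m :=
  ⟨((a : ℕ) + (m - 1)) % m, Nat.mod_lt _ a.pos⟩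

/-- `f : Fin l → V` traces an `l`-cycle of `G`: it is injective and cyclically
consecutive vertices are adjacent. -/
def IsCycleMap {V : Type} (G : SimpleGraph V) (l : ℕ) (f : Fin l → V) : Prop :=
  Function.Injective f ∧ ∀ i : Fin l, G.Adj (f i) (f (cyclicSucc i))

/-- The number `E_l(G)` of `l`-cycles of `G`, counted up to rotation and reflection
(each such cycle is traced by exactly `2 * l` maps `Fin l → V`). -/
noncomputable def cycleCount {V : Type} [Fintype V] (G : SimpleGraph V) (l : ℕ) : ℕ :=
  (Finset.univ.filter (fun f : Fin l → V => IsCycleMap G l f)).card / (2 * l)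

/-- `o` is an orientation of `G`: every edge gets exactly one direction. -/
def IsOrientation {V : Type} (G : SimpleGraph V) (o : V → V → Prop) : Prop :=
  ∀ ⦃x y : V⦄, G.Adj x y → (o x y ↔ ¬ o y x)

/-- The sign of a cycle map with respect to a direction relation `o`:
`+1` iff the number of edges agreeing with the traversal is even. -/
noncomputable def cycleSign {V : Type} {l : ℕ} (o : V → V → Prop) (f : Fin l → V) : ℤ :=
  (-1) ^ (Finset.univ.filter (fun i : Fin l => o (f i) (f (cyclicSucc i)))).card

/-- The sum of signs of all `l`-cycles of `G` (counted up to rotation and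
reflection) with respect to the direction relation `o`. -/
noncomputable def signedCycleSum {V : Type} [Fintype V] (G : SimpleGraph V)
    (o : V → V → Prop) (l : ℕ) : ℤ :=
  (∑ f ∈ Finset.univ.filter (fun f : Fin l → V => IsCycleMap G l f),
    cycleSign o f) / (2 * (l : ℤ))

/-- The graph `Γ'_AB`: toggle the adjacency between the vertices `A` and `B`. -/
def toggleEdge {V : Type} (G : SimpleGraph V) (A B : V) : SimpleGraph V where
  Adj x y := x ≠ y ∧ (G.Adj x y ↔ ¬((x = A ∧ y = B) ∨ (x = B ∧ y = A)))
  symm := ⟨by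
    intro x y h
    obtain ⟨h1, h2⟩ := h
    refine ⟨h1.symm, ?_⟩
    rw [G.adj_comm]
    tauto⟩
  loopless := ⟨fun x h => h.1 rfl⟩

/-- The graph `Γ̃_AB`: toggle the adjacency between `A` and every vertex
`C ∉ {A, B}` adjacent to `B` in `Γ`. -/
def tildeGraph {V : Type} (G : SimpleGraph V) (A B : V) : SimpleGraph V where
  Adj x y := x ≠ y ∧
    (G.Adj x y ↔ ¬((x = A ∧ y ≠ B ∧ G.Adj y B) ∨ (y = A ∧ x ≠ B ∧ G.Adj x B)))
  symm := ⟨by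
    intro x y h
    obtain ⟨h1, h2⟩ := h
    refine ⟨h1.symm, ?_⟩
    rw [G.adj_comm]
    tauto⟩
  loopless := ⟨fun x h => h.1 rfl⟩

/-- A chord diagram of order `n`: a partition of the `2 * n` cyclically ordered
points `0, 1, …, 2n - 1` into `n` two-element blocks (chords), here recorded by
the function assigning to each point its chord. -/
structure ChordDiagram (n : ℕ) where
  chord : Fin (2 * n) → Fin n
  fiber_two : ∀ i : Fin n, (Finset.univ.filter (fun x => chord x = i)).card = 2

namespace ChordDiagram

variable {n : ℕ}

/-- The pair of endpoints of the chord `i`. -/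
def endpoints (d : ChordDiagram n) (i : Fin n) : Finset (Fin (2 * n)) :=
  Finset.univ.filter (fun x => d.chord x = i)

lemma endpoints_nonempty (d : ChordDiagram n) (i : Fin n) : (d.endpoints i).Nonempty := by
  rw [← Finset.card_pos, endpoints, d.fiber_two]
  norm_num

/-- The smaller endpoint of the chord `i`. -/
def lo (d : ChordDiagram n) (i : Fin n) : Fin (2 * n) :=
  (d.endpoints i).min' (d.endpoints_nonempty i)

/-- The larger endpoint of the chord `i`. -/
def hi (d : ChordDiagram n) (i : Fin n) : Fin (2 * n) :=
  (d.endpoints i).max' (d.endpoints_nonempty i)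

/-- Chords `i` and `j` cross: exactly one endpoint of `j` lies strictly between
the two endpoints of `i`. -/
def Crosses (d : ChordDiagram n) (i j : Fin n) : Prop :=
  Xor' (d.lo i < d.lo j ∧ d.lo j < d.hi i) (d.lo i < d.hi j ∧ d.hi j < d.hi i)

/-- The intersection graph `γ(d)` of the chord diagram `d`. -/
def interGraph (d : ChordDiagram n) : SimpleGraph (Fin n) where
  Adj i j := i ≠ j ∧ (d.Crosses i j ∨ d.Crosses j i)
  symm := ⟨fun i j h => ⟨h.1.symm, h.2.symm⟩⟩
  loopless := ⟨fun i h => h.1 rfl⟩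

lemma chord_lo (d : ChordDiagram n) (i : Fin n) : d.chord (d.lo i) = i := by
  have h := (d.endpoints i).min'_mem (d.endpoints_nonempty i)
  exact (Finset.mem_filter.mp h).2

/-- An orientation of a chord diagram: a choice of a beginning point for each
chord (the other endpoint being its end). -/
def Orientation (d : ChordDiagram n) : Type :=
  { b : Fin n → Fin (2 * n) // ∀ i, d.chord (b i) = i }

/-- The end of the chord `i`, i.e. its endpoint other than the beginning. -/
def endOf (d : ChordDiagram n) (o : d.Orientation) (i : Fin n) : Fin (2 * n) :=
  if o.1 i = d.lo i then d.hi i else d.lo i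

/-- The point `z` lies on the arc going in the positive direction from `a` to `b`. -/
def InArc {m : ℕ} (a b z : Fin m) : Prop :=
  if a < b then a < z ∧ z < b else a < z ∨ z < b

/-- The direction induced by an orientation of the chords on the edges of the
intersection graph: the edge between `i` and `j` is directed from `i` to `j`
iff the beginning of `j` lies on the arc going in the positive direction from
the beginning of `i` to the end of `i`. -/
def dir (d : ChordDiagram n) (o : d.Orientation) (i j : Fin n) : Prop :=
  InArc (o.1 i) (d.endOf o i) (o.1 j)

/-- The canonical orientation: every chord begins at its smaller endpoint. -/
def canonical (d : ChordDiagram n) : d.Orientation :=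
  ⟨d.lo, d.chord_lo⟩

end ChordDiagram

/-- The weight system `R_k`: the sum of the signs of the `2k`-cycles of the
directed intersection graph (for the canonical orientation of the chords). -/
noncomputable def Rk (k : ℕ) {n : ℕ} (d : ChordDiagram n) : ℤ :=
  signedCycleSum d.interGraph (d.dir d.canonical) (2 * k)

/-- When the point at position `p` is moved to position `q` (keeping the relative
order of all the other points), `moveFun p q r` is the old position of the point
occupying the position `r` after the move. -/
def moveFun {m : ℕ} (p q : Fin m) (r : Fin m) : Fin m :=
  if r = q then p
  else if h : (p : ℕ) ≤ (r : ℕ) ∧ (r : ℕ) < (q : ℕ) then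
    ⟨(r : ℕ) + 1, by have := q.isLt; omega⟩
  else if h' : (q : ℕ) < (r : ℕ) ∧ (r : ℕ) ≤ (p : ℕ) then
    ⟨(r : ℕ) - 1, by have := r.isLt; omega⟩
  else r

/-- The invariant `w_C`: `1` if the adjacency matrix of the graph over `ZMod 2`
is nondegenerate, `0` otherwise. -/
noncomputable def wC {V : Type} [Fintype V] (G : SimpleGraph V) : ℤ :=
  if (G.adjMatrix (ZMod 2)).det ≠ 0 then 1 else 0

/-- All set partitions of `Fin n` into nonempty blocks. -/
noncomputable def finPartitions (n : ℕ) : Finset (Finset (Finset (Fin n))) :=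
  Finset.univ.filter (fun P =>
    (∀ s ∈ P, s.Nonempty) ∧ ∀ x : Fin n, ∃! s, s ∈ P ∧ x ∈ s)

/-- A `4`-invariant of finite simple graphs: an integer-valued, isomorphism
invariant function satisfying the `4`-term relation for graphs. -/
structure FourInvariant where
  val : ∀ n : ℕ, SimpleGraph (Fin n) → ℤ
  iso_invariant : ∀ {n m : ℕ} (G : SimpleGraph (Fin n)) (H : SimpleGraph (Fin m)),
    Nonempty (G ≃g H) → val n G = val m H
  four_term : ∀ (n : ℕ) (G : SimpleGraph (Fin n)) (A B : Fin n), A ≠ B →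
    val n G - val n (toggleEdge G A B) =
      val n (tildeGraph G A B) - val n (toggleEdge (tildeGraph G A B) A B)

/-- The `5`-wheel: a `5`-cycle on the vertices `0, …, 4` together with the hub `5`
adjacent to all five cycle vertices. -/
def wheel5 : SimpleGraph (Fin 6) :=
  SimpleGraph.fromRel (fun x y =>
    ((x : ℕ) = 5 ∧ (y : ℕ) < 5) ∨
    ((x : ℕ) < 5 ∧ (y : ℕ) < 5 ∧ (y : ℕ) = ((x : ℕ) + 1) % 5))

/-- The triangular prism: two triangles `{0, 1, 2}` and `{3, 4, 5}` joined by the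
perfect matching `i — i + 3`. -/
def prism : SimpleGraph (Fin 6) :=
  SimpleGraph.fromRel (fun x y =>
    ((x : ℕ) < 3 ∧ (y : ℕ) < 3 ∧ x ≠ y) ∨
    (3 ≤ (x : ℕ) ∧ 3 ≤ (y : ℕ) ∧ x ≠ y) ∨
    ((y : ℕ) = (x : ℕ) + 3))


section Aux

lemma cyclicSucc_cyclicPred {m : ℕ} (a : Fin m) : cyclicSucc (cyclicPred a) = a := by
  have hm := a.pos
  apply Fin.ext
  show (((a : ℕ) + (m - 1)) % m + 1) % m = (a : ℕ)
  rw [Nat.mod_add_mod]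
  have h2 : (a : ℕ) + (m - 1) + 1 = (a : ℕ) + m := by omega
  rw [h2, Nat.add_mod_right, Nat.mod_eq_of_lt a.isLt]

lemma cyclicPred_cyclicSucc {m : ℕ} (a : Fin m) : cyclicPred (cyclicSucc a) = a := by
  have hm := a.pos
  apply Fin.ext
  show (((a : ℕ) + 1) % m + (m - 1)) % m = (a : ℕ)
  rw [Nat.mod_add_mod]
  have h2 : (a : ℕ) + 1 + (m - 1) = (a : ℕ) + m := by omega
  rw [h2, Nat.add_mod_right, Nat.mod_eq_of_lt a.isLt]

lemma cyclicSucc_ne {m : ℕ} (hm : 2 ≤ m) (a : Fin m) : cyclicSucc a ≠ a := by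
  intro h
  have h1 : ((a : ℕ) + 1) % m = (a : ℕ) := congrArg Fin.val h
  have h2 := a.isLt
  rcases Nat.lt_or_ge ((a : ℕ) + 1) m with h3 | h3
  · rw [Nat.mod_eq_of_lt h3] at h1; omega
  · have h4 : (a : ℕ) + 1 = m := by omega
    rw [h4, Nat.mod_self] at h1; omega

lemma neg_one_pow_eq_of_even_add {x y : ℕ} (h : Even (x + y)) :
    ((-1 : ℤ)) ^ x = (-1) ^ y := by
  rcases Nat.even_or_odd x with hx | hx
  · have hy : Even y := (Nat.even_add.mp h).mp hx
    rw [hx.neg_one_pow, hy.neg_one_pow]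
  · have hy : Odd y := by
      rw [← Nat.not_even_iff_odd]
      intro he
      exact (Nat.not_even_iff_odd.mpr hx) ((Nat.even_add.mp h).mpr he)
    rw [hx.neg_one_pow, hy.neg_one_pow]

namespace ChordDiagram

variable {n : ℕ}

lemma inArc_iff {m : ℕ} (a b z : Fin m) :
    InArc a b z ↔
      (if (a : ℕ) < (b : ℕ) then (a : ℕ) < (z : ℕ) ∧ (z : ℕ) < (b : ℕ)
        else (a : ℕ) < (z : ℕ) ∨ (z : ℕ) < (b : ℕ)) := by
  rw [InArc]
  by_cases h : a < b
  · rw [if_pos h, if_pos (Fin.lt_def.mp h)]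
    exact Iff.rfl
  · rw [if_neg h, if_neg (fun hh => h (Fin.lt_def.mpr hh))]
    exact Iff.rfl

lemma mem_endpoints' (d : ChordDiagram n) {i : Fin n} {x : Fin (2 * n)} :
    x ∈ d.endpoints i ↔ d.chord x = i := by
  simp [endpoints]

lemma chord_hi' (d : ChordDiagram n) (i : Fin n) : d.chord (d.hi i) = i :=
  d.mem_endpoints'.mp ((d.endpoints i).max'_mem _)

lemma endpoints_card (d : ChordDiagram n) (i : Fin n) : (d.endpoints i).card = 2 :=
  d.fiber_two i

lemma lo_lt_hi' (d : ChordDiagram n) (i : Fin n) : d.lo i < d.hi i := by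
  apply Finset.min'_lt_max'_of_card
  rw [d.endpoints_card]
  norm_num

lemma eq_lo_or_eq_hi' (d : ChordDiagram n) {i : Fin n} {x : Fin (2 * n)}
    (hx : d.chord x = i) : x = d.lo i ∨ x = d.hi i := by
  have hmem : x ∈ d.endpoints i := d.mem_endpoints'.mpr hx
  have hsub : ({d.lo i, d.hi i} : Finset (Fin (2 * n))) ⊆ d.endpoints i := by
    intro z hz
    rcases Finset.mem_insert.mp hz with rfl | hz
    · exact (d.endpoints i).min'_mem _
    · rw [Finset.mem_singleton.mp hz]
      exact (d.endpoints i).max'_mem _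
  have hcard : (d.endpoints i).card ≤ ({d.lo i, d.hi i} : Finset (Fin (2 * n))).card := by
    rw [Finset.card_pair (d.lo_lt_hi' i).ne, d.endpoints_card]
  have heq := Finset.eq_of_subset_of_card_le hsub hcard
  rw [← heq] at hmem
  simpa using hmem

lemma interleave (d : ChordDiagram n) {x y : Fin n} (h : d.interGraph.Adj x y) :
    (((d.lo x : ℕ) < (d.lo y : ℕ)) ∧ ((d.lo y : ℕ) < (d.hi x : ℕ)) ∧
      ((d.hi x : ℕ) < (d.hi y : ℕ))) ∨
    (((d.lo y : ℕ) < (d.lo x : ℕ)) ∧ ((d.lo x : ℕ) < (d.hi y : ℕ)) ∧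
      ((d.hi y : ℕ) < (d.hi x : ℕ))) := by
  obtain ⟨hne, hcr⟩ := h
  have hx := Fin.lt_def.mp (d.lo_lt_hi' x)
  have hy := Fin.lt_def.mp (d.lo_lt_hi' y)
  have d1 : (d.lo x : ℕ) ≠ (d.lo y : ℕ) := fun e =>
    hne (by rw [← d.chord_lo x, Fin.ext e, d.chord_lo])
  have d2 : (d.lo x : ℕ) ≠ (d.hi y : ℕ) := fun e =>
    hne (by rw [← d.chord_lo x, Fin.ext e, d.chord_hi'])
  have d3 : (d.hi x : ℕ) ≠ (d.lo y : ℕ) := fun e =>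
    hne (by rw [← d.chord_hi' x, Fin.ext e, d.chord_lo])
  have d4 : (d.hi x : ℕ) ≠ (d.hi y : ℕ) := fun e =>
    hne (by rw [← d.chord_hi' x, Fin.ext e, d.chord_hi'])
  simp only [Crosses, Xor', Xor, Fin.lt_def] at hcr
  omega

lemma dir_eq_of_ne (d : ChordDiagram n) (o1 o2 : d.Orientation) (i0 : Fin n)
    (ho : ∀ j, j ≠ i0 → o1.1 j = o2.1 j) {x y : Fin n} (hx : x ≠ i0) (hy : y ≠ i0) :
    d.dir o1 x y ↔ d.dir o2 x y := by
  simp only [dir, endOf]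
  rw [ho x hx, ho y hy]

lemma dir_flip_left (d : ChordDiagram n) (o1 o2 : d.Orientation) {i0 y : Fin n}
    (hd : o1.1 i0 ≠ o2.1 i0) (hy : y ≠ i0) (ho : o1.1 y = o2.1 y) :
    (d.dir o1 i0 y ↔ ¬ d.dir o2 i0 y) := by
  have hb1 := d.eq_lo_or_eq_hi' (o1.2 i0)
  have hb2 := d.eq_lo_or_eq_hi' (o2.2 i0)
  have hz1 : (o1.1 y : ℕ) ≠ (d.lo i0 : ℕ) := fun e =>
    hy (by rw [← o1.2 y, Fin.ext e, d.chord_lo])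
  have hz2 : (o1.1 y : ℕ) ≠ (d.hi i0 : ℕ) := fun e =>
    hy (by rw [← o1.2 y, Fin.ext e, d.chord_hi'])
  have hlh := Fin.lt_def.mp (d.lo_lt_hi' i0)
  have hlhne : ¬ d.hi i0 = d.lo i0 := fun e => (d.lo_lt_hi' i0).ne e.symm
  simp only [dir, endOf]
  rw [← ho]
  rcases hb1 with h1 | h1 <;> rcases hb2 with h2 | h2
  · exact absurd (h1.trans h2.symm) hd
  · rw [h1, h2, if_pos rfl, if_neg hlhne]
    simp only [inArc_iff]
    split_ifs <;> omega
  · rw [h1, h2, if_neg hlhne, if_pos rfl]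
    simp only [inArc_iff]
    split_ifs <;> omega
  · exact absurd (h1.trans h2.symm) hd

lemma dir_flip_right (d : ChordDiagram n) (o1 o2 : d.Orientation) {i0 y : Fin n}
    (hd : o1.1 i0 ≠ o2.1 i0) (hy : y ≠ i0) (ho : o1.1 y = o2.1 y)
    (hadj : d.interGraph.Adj y i0) :
    (d.dir o1 y i0 ↔ ¬ d.dir o2 y i0) := by
  have hint := d.interleave hadj
  have hby := d.eq_lo_or_eq_hi' (o1.2 y)
  have hb1 := d.eq_lo_or_eq_hi' (o1.2 i0)
  have hb2 := d.eq_lo_or_eq_hi' (o2.2 i0)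
  have hly := Fin.lt_def.mp (d.lo_lt_hi' y)
  have hlhne : ¬ d.hi y = d.lo y := fun e => (d.lo_lt_hi' y).ne e.symm
  simp only [dir, endOf]
  rw [← ho]
  rcases hb1 with h1 | h1 <;> rcases hb2 with h2 | h2
  · exact absurd (h1.trans h2.symm) hd
  · rcases hby with hb | hb
    · rw [hb, if_pos rfl, h1, h2]
      simp only [inArc_iff]
      split_ifs <;> omega
    · rw [hb, if_neg hlhne, h1, h2]
      simp only [inArc_iff]
      split_ifs <;> omega
  · rcases hby with hb | hb
    · rw [hb, if_pos rfl, h1, h2]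
      simp only [inArc_iff]
      split_ifs <;> omega
    · rw [hb, if_neg hlhne, h1, h2]
      simp only [inArc_iff]
      split_ifs <;> omega
  · exact absurd (h1.trans h2.symm) hd

lemma cycleSign_eq_of_single (d : ChordDiagram n) {l : ℕ} (hl : 2 ≤ l)
    (o1 o2 : d.Orientation) (i0 : Fin n) (ho : ∀ j, j ≠ i0 → o1.1 j = o2.1 j)
    (f : Fin l → Fin n) (hf : IsCycleMap d.interGraph l f) :
    cycleSign (d.dir o1) f = cycleSign (d.dir o2) f := by
  by_cases hd : o1.1 i0 = o2.1 i0
  · have ho12 : o1 = o2 := by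
      apply Subtype.ext
      funext j
      by_cases hj : j = i0
      · subst hj; exact hd
      · exact ho j hj
    rw [ho12]
  obtain ⟨hinj, hadj⟩ := hf
  set S1 := Finset.univ.filter (fun i : Fin l => d.dir o1 (f i) (f (cyclicSucc i))) with hS1
  set S2 := Finset.univ.filter (fun i : Fin l => d.dir o2 (f i) (f (cyclicSucc i))) with hS2
  set T := Finset.univ.filter (fun i : Fin l => f i = i0 ∨ f (cyclicSucc i) = i0) with hT
  have hTeven : Even T.card := by
    by_cases hr : ∃ a, f a = i0
    · obtain ⟨a, ha⟩ := hr
      have hTeq : T = {cyclicPred a, a} := by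
        ext i
        simp only [hT, Finset.mem_filter, Finset.mem_univ, true_and,
          Finset.mem_insert, Finset.mem_singleton]
        constructor
        · rintro (h | h)
          · exact Or.inr (hinj (h.trans ha.symm))
          · refine Or.inl ?_
            have h2 : cyclicSucc i = a := hinj (h.trans ha.symm)
            rw [← h2, cyclicPred_cyclicSucc]
        · rintro (rfl | rfl)
          · exact Or.inr (by rw [cyclicSucc_cyclicPred]; exact ha)
          · exact Or.inl ha
      have hpa : cyclicPred a ≠ a := by
        intro h
        refine cyclicSucc_ne hl a ?_
        nth_rewrite 1 [← h]
        exact cyclicSucc_cyclicPred a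
      rw [hTeq, Finset.card_pair hpa]
      exact even_two
    · push_neg at hr
      have : T = ∅ := by
        ext i
        simp only [hT, Finset.mem_filter, Finset.mem_univ, true_and, Finset.notMem_empty,
          iff_false]
        push_neg
        exact ⟨hr i, hr _⟩
      rw [this]
      simp
  have hoff : ∀ i : Fin l, i ∉ T →
      (d.dir o1 (f i) (f (cyclicSucc i)) ↔ d.dir o2 (f i) (f (cyclicSucc i))) := by
    intro i hi
    simp only [hT, Finset.mem_filter, Finset.mem_univ, true_and] at hi
    push_neg at hi
    exact d.dir_eq_of_ne o1 o2 i0 ho hi.1 hi.2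
  have hon : ∀ i : Fin l, i ∈ T →
      (d.dir o1 (f i) (f (cyclicSucc i)) ↔ ¬ d.dir o2 (f i) (f (cyclicSucc i))) := by
    intro i hi
    simp only [hT, Finset.mem_filter, Finset.mem_univ, true_and] at hi
    have hne := (hadj i).ne
    rcases hi with h | h
    · rw [h]
      have hy : f (cyclicSucc i) ≠ i0 := by rw [← h]; exact fun e => hne e.symm
      exact d.dir_flip_left o1 o2 hd hy (ho _ hy)
    · rw [h]
      have hy : f i ≠ i0 := by rw [← h]; exact hne
      exact d.dir_flip_right o1 o2 hd hy (ho _ hy) (h ▸ hadj i)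
  have hsd : S1 \ T = S2 \ T := by
    ext i
    simp only [hS1, hS2, Finset.mem_sdiff, Finset.mem_filter, Finset.mem_univ, true_and]
    constructor
    · rintro ⟨h1, h2⟩; exact ⟨(hoff i h2).mp h1, h2⟩
    · rintro ⟨h1, h2⟩; exact ⟨(hoff i h2).mpr h1, h2⟩
  have hint : S1 ∩ T = T \ S2 := by
    ext i
    simp only [hS1, hS2, Finset.mem_inter, Finset.mem_sdiff, Finset.mem_filter,
      Finset.mem_univ, true_and]
    constructor
    · rintro ⟨h1, h2⟩; exact ⟨h2, (hon i h2).mp h1⟩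
    · rintro ⟨h1, h2⟩; exact ⟨(hon i h1).mpr h2, h1⟩
  have e1 : (S1 ∩ T).card + (S1 \ T).card = S1.card := Finset.card_inter_add_card_sdiff S1 T
  have e2 : (S2 ∩ T).card + (S2 \ T).card = S2.card := Finset.card_inter_add_card_sdiff S2 T
  have e3 : (T ∩ S2).card + (T \ S2).card = T.card := Finset.card_inter_add_card_sdiff T S2
  have e4 : (S2 ∩ T).card = (T ∩ S2).card := by rw [Finset.inter_comm]
  have e5 : (S1 ∩ T).card = (T \ S2).card := by rw [hint]
  have e6 : (S1 \ T).card = (S2 \ T).card := by rw [hsd]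
  have heven : Even (S1.card + S2.card) := by
    obtain ⟨t, ht⟩ := hTeven
    refine ⟨(S1 \ T).card + t, by omega⟩
  simp only [cycleSign]
  exact neg_one_pow_eq_of_even_add heven

lemma signedCycleSum_step (d : ChordDiagram n) {l : ℕ} (hl : 2 ≤ l)
    (o1 o2 : d.Orientation) (i0 : Fin n) (ho : ∀ j, j ≠ i0 → o1.1 j = o2.1 j) :
    signedCycleSum d.interGraph (d.dir o1) l = signedCycleSum d.interGraph (d.dir o2) l := by
  unfold signedCycleSum
  congr 1
  apply Finset.sum_congr rfl
  intro f hf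
  exact d.cycleSign_eq_of_single hl o1 o2 i0 ho f (Finset.mem_filter.mp hf).2

end ChordDiagram

end Aux
theorem signedCycleSum_independent_of_orientation {n : ℕ} (d : ChordDiagram n)
    (k : ℕ) (hk : 2 ≤ k) (o1 o2 : d.Orientation) :
    signedCycleSum d.interGraph (d.dir o1) (2 * k) =
      signedCycleSum d.interGraph (d.dir o2) (2 * k) := by
  have hl : 2 ≤ 2 * k := by omega
  suffices H : ∀ m (p q : d.Orientation),
      (Finset.univ.filter fun i => p.1 i ≠ q.1 i).card = m →
      signedCycleSum d.interGraph (d.dir p) (2 * k) =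
        signedCycleSum d.interGraph (d.dir q) (2 * k) by
    exact H _ o1 o2 rfl
  intro m
  induction m with
  | zero =>
    intro p q h
    have hpq : p = q := by
      apply Subtype.ext
      funext i
      by_contra hne
      have hmem : i ∈ Finset.univ.filter fun i => p.1 i ≠ q.1 i := by simp [hne]
      rw [Finset.card_eq_zero.mp h] at hmem
      simp at hmem
    rw [hpq]
  | succ m ih =>
    intro p q h
    have hne : (Finset.univ.filter fun i => p.1 i ≠ q.1 i).Nonempty := by
      rw [← Finset.card_pos, h]; omega
    obtain ⟨i0, hi0⟩ := hne
    have hprop : ∀ i, d.chord (Function.update p.1 i0 (q.1 i0) i) = i := by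
      intro i
      by_cases hi : i = i0
      · subst hi; rw [Function.update_self]; exact q.2 i
      · rw [Function.update_of_ne hi]; exact p.2 i
    set o3 : d.Orientation := ⟨Function.update p.1 i0 (q.1 i0), hprop⟩ with ho3
    have step1 := d.signedCycleSum_step hl p o3 i0
      (fun j hj => (Function.update_of_ne hj _ _).symm)
    have hset : (Finset.univ.filter fun i => o3.1 i ≠ q.1 i) =
        (Finset.univ.filter fun i => p.1 i ≠ q.1 i).erase i0 := by
      ext i
      simp only [Finset.mem_filter, Finset.mem_univ, true_and, Finset.mem_erase]
      by_cases hi : i = i0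
      · subst hi
        simp [ho3, Function.update_self]
      · simp [ho3, Function.update_of_ne hi, hi]
    have hcard : (Finset.univ.filter fun i => o3.1 i ≠ q.1 i).card = m := by
      rw [hset, Finset.card_erase_of_mem hi0, h]
      omega
    exact step1.trans (ih o3 q hcard)
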